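/- In a rigid abelian symmetric monoidal category A, if U is a subobject of the unit object 1, then 1 decomposes as the direct sum of U and U^⊥, where U^⊥ is the kernel of the composite 1 → U^∨ induced by dualising the inclusion U → 1. -/

import Mathlib

open CategoryTheory CategoryTheory.Limits CategoryTheory.MonoidalCategory

set_option linter.unusedSectionVars false
set_option maxHeartbeats 1000000

namespace UnitDecompAux

variable {A : Type*} [Category A] [Abelian A]
    [MonoidalCategory A] [SymmetricCategory A] [MonoidalPreadditive A]
    [RigidCategory A]

/-! ### Exactness of tensoring -/

lemma mono_whiskerRight' {X Y : A} (f : X ⟶ Y) [Mono f] (W : A) : Mono (f ▷ W) := by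
  haveI : ExactPairing (Wᘁ) W := BraidedCategory.exactPairing_swap W (Wᘁ)
  haveI := Functor.preservesMonomorphisms_of_adjunction (tensorRightAdjunction (Wᘁ) W)
  have h := (tensorRight W).map_mono f
  simpa using h

lemma epi_whiskerRight' {X Y : A} (f : X ⟶ Y) [Epi f] (W : A) : Epi (f ▷ W) := by
  haveI := Functor.preservesEpimorphisms_of_adjunction (tensorRightAdjunction W (Wᘁ))
  have h := (tensorRight W).map_epi f
  simpa using h

lemma mono_whiskerLeft' (W : A) {X Y : A} (f : X ⟶ Y) [Mono f] : Mono (W ◁ f) := by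
  haveI := Functor.preservesMonomorphisms_of_adjunction (tensorLeftAdjunction W (Wᘁ))
  have h := (tensorLeft W).map_mono f
  simpa using h

lemma epi_whiskerLeft' (W : A) {X Y : A} (f : X ⟶ Y) [Epi f] : Epi (W ◁ f) := by
  haveI : ExactPairing (Wᘁ) W := BraidedCategory.exactPairing_swap W (Wᘁ)
  haveI := Functor.preservesEpimorphisms_of_adjunction (tensorLeftAdjunction (Wᘁ) W)
  have h := (tensorLeft W).map_epi f
  simpa using h

/-! ### Zero objects and tensoring -/

lemma isZero_tensor_left {X : A} (h : IsZero X) (Y : A) : IsZero (X ⊗ Y) := by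
  rw [IsZero.iff_id_eq_zero] at h ⊢
  rw [← MonoidalCategory.id_whiskerRight, h, MonoidalPreadditive.zero_whiskerRight]

lemma isZero_tensor_right (Y : A) {X : A} (h : IsZero X) : IsZero (Y ⊗ X) := by
  rw [IsZero.iff_id_eq_zero] at h ⊢
  rw [← MonoidalCategory.whiskerLeft_id, h, MonoidalPreadditive.whiskerLeft_zero]

lemma isZero_of_mono_zero {X Y : A} (f : X ⟶ Y) [Mono f] (h : f = 0) : IsZero X := by
  rw [IsZero.iff_id_eq_zero]
  apply (cancel_mono f).1
  simp [h]

lemma isZero_of_epi_zero {X Y : A} (f : X ⟶ Y) [Epi f] (h : f = 0) : IsZero Y := by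
  rw [IsZero.iff_id_eq_zero]
  apply (cancel_epi f).1
  simp [h]

/-! ### Tensoring preserves cokernels -/

lemma isZero_cokernel_whiskerLeft (Z : A) {X Y : A} (m : X ⟶ Y)
    (h : IsZero (Z ⊗ cokernel m)) : IsZero (cokernel (Z ◁ m)) := by
  haveI : ExactPairing (Zᘁ) Z := BraidedCategory.exactPairing_swap Z (Zᘁ)
  haveI : PreservesColimitsOfSize.{0, 0} (tensorLeft Z) :=
    (tensorLeftAdjunction (Zᘁ) Z).leftAdjoint_preservesColimits
  have e : (tensorLeft Z).obj (cokernel m) ≅ cokernel ((tensorLeft Z).map m) :=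
    PreservesCokernel.iso _ _
  exact h.of_iso e.symm

lemma isZero_cokernel_whiskerRight (Z : A) {X Y : A} (m : X ⟶ Y)
    (h : IsZero (cokernel m ⊗ Z)) : IsZero (cokernel (m ▷ Z)) := by
  haveI : PreservesColimitsOfSize.{0, 0} (tensorRight Z) :=
    (tensorRightAdjunction Z (Zᘁ)).leftAdjoint_preservesColimits
  have e : (tensorRight Z).obj (cokernel m) ≅ cokernel ((tensorRight Z).map m) :=
    PreservesCokernel.iso _ _
  exact h.of_iso e.symm

/-! ### Subobjects of the unit -/

lemma isIso_whiskerLeft_self {Z : A} (m : Z ⟶ 𝟙_ A) [Mono m] : IsIso (Z ◁ m) := by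
  haveI hm : Mono (Z ◁ m) := mono_whiskerLeft' Z m
  haveI h1 : Mono (m ▷ cokernel m) := mono_whiskerRight' m _
  have h2 : Z ◁ cokernel.π m ≫ m ▷ cokernel m = 0 := by
    rw [whisker_exchange]
    simp [MonoidalCategory.whiskerRight_id, MonoidalCategory.id_whiskerLeft,
      MonoidalCategory.unitors_equal, MonoidalCategory.unitors_inv_equal,
      cokernel.condition]
  have h3 : Z ◁ cokernel.π m = 0 := zero_of_comp_mono _ h2
  haveI h4 : Epi (Z ◁ cokernel.π m) := epi_whiskerLeft' Z _
  have h5 : IsZero (Z ⊗ cokernel m) := isZero_of_epi_zero _ h3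
  have h6 : IsZero (cokernel (Z ◁ m)) := isZero_cokernel_whiskerLeft Z m h5
  haveI : Epi (Z ◁ m) :=
    Abelian.epi_of_cokernel_π_eq_zero _ (h6.eq_zero_of_tgt _)
  exact isIso_of_mono_of_epi _

lemma isIso_whiskerRight_self {Z : A} (m : Z ⟶ 𝟙_ A) [Mono m] : IsIso (m ▷ Z) := by
  haveI hm : Mono (m ▷ Z) := mono_whiskerRight' m Z
  haveI h1 : Mono (cokernel m ◁ m) := mono_whiskerLeft' _ m
  have h2 : cokernel.π m ▷ Z ≫ cokernel m ◁ m = 0 := by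
    rw [← whisker_exchange]
    simp [MonoidalCategory.whiskerRight_id, MonoidalCategory.id_whiskerLeft,
      MonoidalCategory.unitors_equal, MonoidalCategory.unitors_inv_equal,
      cokernel.condition]
  have h3 : cokernel.π m ▷ Z = 0 := zero_of_comp_mono _ h2
  haveI h4 : Epi (cokernel.π m ▷ Z) := epi_whiskerRight' _ Z
  have h5 : IsZero (cokernel m ⊗ Z) := isZero_of_epi_zero _ h3
  have h6 : IsZero (cokernel (m ▷ Z)) := isZero_cokernel_whiskerRight Z m h5
  haveI : Epi (m ▷ Z) :=
    Abelian.epi_of_cokernel_π_eq_zero _ (h6.eq_zero_of_tgt _)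
  exact isIso_of_mono_of_epi _

/-! ### Duals and zero objects -/

lemma isZero_rightDual_tensor {X Y : A} (h : IsZero (Y ⊗ X)) :
    IsZero ((Xᘁ) ⊗ (Yᘁ)) := by
  have hz : IsZero (Y ⊗ (X ⊗ ((Xᘁ) ⊗ (Yᘁ)))) :=
    (isZero_tensor_left h ((Xᘁ) ⊗ (Yᘁ))).of_iso (α_ Y X ((Xᘁ) ⊗ (Yᘁ))).symm
  have key : ∀ u v : (Yᘁ : A) ⟶ X ⊗ ((Xᘁ) ⊗ (Yᘁ)), u = v := by
    intro u v
    have h2 : (ρ_ (Yᘁ : A)).hom ≫ u = (ρ_ (Yᘁ : A)).hom ≫ v := by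
      apply (tensorLeftHomEquiv (𝟙_ A) Y (Yᘁ) (X ⊗ ((Xᘁ) ⊗ (Yᘁ)))).injective
      exact hz.eq_of_tgt _ _
    exact (cancel_epi ((ρ_ (Yᘁ : A)).hom)).mp h2
  rw [IsZero.iff_id_eq_zero]
  apply (tensorLeftHomEquiv (Yᘁ) X (Xᘁ) ((Xᘁ) ⊗ (Yᘁ))).injective
  exact key _ _

lemma isZero_of_dual_tensor_zero {X : A} (h : IsZero ((Xᘁ) ⊗ X)) : IsZero X := by
  have hz : IsZero (X ⊗ ((Xᘁ) ⊗ X)) := isZero_tensor_right X h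
  have zig := ExactPairing.evaluation_coevaluation X (Xᘁ)
  have h0 : X ◁ ε_ X (Xᘁ) = 0 := hz.eq_zero_of_src _
  rw [h0, comp_zero] at zig
  rw [IsZero.iff_id_eq_zero]
  calc 𝟙 X = (λ_ X).inv ≫ ((λ_ X).hom ≫ (ρ_ X).inv) ≫ (ρ_ X).hom := by simp
  _ = 0 := by rw [← zig]; simp

/-! ### The unit pairing -/

lemma unit_pairing_coev : (η_ (𝟙_ A) ((𝟙_ A)ᘁ)) = (ρ_ (𝟙_ A)).inv := rfl

lemma unit_pairing_ev : (ε_ (𝟙_ A) ((𝟙_ A)ᘁ)) = (ρ_ (𝟙_ A)).hom := rfl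

/-- Uncurrying the "name" `φ : 𝟙 ⟶ Vᘁ` of `i : V ⟶ 𝟙` recovers `i`. -/
lemma phi_uncurry {V : A} (i : V ⟶ 𝟙_ A) :
    (((η_ (𝟙_ A) ((𝟙_ A)ᘁ) ≫ (λ_ ((𝟙_ A)ᘁ)).hom) ≫ iᘁ) ▷ V) ≫ ε_ V (Vᘁ) =
      (λ_ V).hom ≫ i := by
  rw [MonoidalCategory.comp_whiskerRight, Category.assoc,
    rightAdjointMate_comp_evaluation]
  show (((ρ_ (𝟙_ A)).inv ≫ (λ_ (𝟙_ A)).hom) ▷ V) ≫ ((𝟙_ A) ◁ i ≫ (ρ_ (𝟙_ A)).hom) =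
    (λ_ V).hom ≫ i
  rw [MonoidalCategory.unitors_equal]
  simp [MonoidalCategory.unitors_inv_equal]

/-! ### The mono part -/

lemma mono_comp_cokernel_π {V K : A} (i : V ⟶ 𝟙_ A) [Mono i] (k : K ⟶ 𝟙_ A) [Mono k]
    (hkV : k ▷ V = 0) : Mono (k ≫ cokernel.π i) := by
  have hcond : (kernel.ι (k ≫ cokernel.π i) ≫ k) ≫ cokernel.π i = 0 := by
    rw [Category.assoc]; exact kernel.condition _
  haveI : Mono (kernel.ι (k ≫ cokernel.π i) ≫ k) := mono_comp _ _
  have hw : Abelian.monoLift i (kernel.ι (k ≫ cokernel.π i) ≫ k) hcond ≫ i =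
      kernel.ι (k ≫ cokernel.π i) ≫ k := Abelian.monoLift_comp _ _ _
  have hZVz : (kernel.ι (k ≫ cokernel.π i) ≫ k) ▷ V = 0 := by
    rw [MonoidalCategory.comp_whiskerRight, hkV, comp_zero]
  haveI : Mono ((kernel.ι (k ≫ cokernel.π i) ≫ k) ▷ V) := mono_whiskerRight' _ V
  have hZV : IsZero (kernel (k ≫ cokernel.π i) ⊗ V) :=
    isZero_of_mono_zero ((kernel.ι (k ≫ cokernel.π i) ≫ k) ▷ V) hZVz
  haveI : Mono (Abelian.monoLift i (kernel.ι (k ≫ cokernel.π i) ≫ k) hcond ≫ i) := by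
    rw [hw]; infer_instance
  haveI hwm : Mono (Abelian.monoLift i (kernel.ι (k ≫ cokernel.π i) ≫ k) hcond) :=
    mono_of_mono (Abelian.monoLift i (kernel.ι (k ≫ cokernel.π i) ≫ k) hcond) i
  haveI : Mono (kernel (k ≫ cokernel.π i) ◁
      Abelian.monoLift i (kernel.ι (k ≫ cokernel.π i) ≫ k) hcond) :=
    mono_whiskerLeft' _ _
  have hZZ : IsZero (kernel (k ≫ cokernel.π i) ⊗ kernel (k ≫ cokernel.π i)) :=
    isZero_of_mono_zero (kernel (k ≫ cokernel.π i) ◁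
      Abelian.monoLift i (kernel.ι (k ≫ cokernel.π i) ≫ k) hcond)
      (hZV.eq_zero_of_tgt _)
  haveI : IsIso (kernel (k ≫ cokernel.π i) ◁ (kernel.ι (k ≫ cokernel.π i) ≫ k)) :=
    isIso_whiskerLeft_self (kernel.ι (k ≫ cokernel.π i) ≫ k)
  have hZ1 : IsZero (kernel (k ≫ cokernel.π i) ⊗ 𝟙_ A) :=
    hZZ.of_iso (asIso (kernel (k ≫ cokernel.π i) ◁
      (kernel.ι (k ≫ cokernel.π i) ≫ k))).symm
  have hZzero : IsZero (kernel (k ≫ cokernel.π i)) := hZ1.of_iso (ρ_ _).symm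
  exact Abelian.mono_of_kernel_ι_eq_zero _ (hZzero.eq_zero_of_src _)

lemma main_mono {V K : A} (i : V ⟶ 𝟙_ A) [Mono i] (k : K ⟶ 𝟙_ A) [Mono k]
    (hkV : k ▷ V = 0) : Mono (biprod.desc i k) := by
  haveI hkp : Mono (k ≫ cokernel.π i) := mono_comp_cokernel_π i k hkV
  apply Abelian.mono_of_kernel_ι_eq_zero
  have hsnd : kernel.ι (biprod.desc i k) ≫ biprod.snd = 0 := by
    apply zero_of_comp_mono (k ≫ cokernel.π i)
    have h0 : kernel.ι (biprod.desc i k) ≫ biprod.desc i k ≫ cokernel.π i = 0 := by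
      rw [← Category.assoc, kernel.condition, zero_comp]
    have h0' : kernel.ι (biprod.desc i k) ≫
        (biprod.fst ≫ i + biprod.snd ≫ k) ≫ cokernel.π i = 0 := by
      rw [← biprod.desc_eq]; exact h0
    simpa [Preadditive.add_comp, Preadditive.comp_add, cokernel.condition] using h0'
  have hfst : kernel.ι (biprod.desc i k) ≫ biprod.fst = 0 := by
    apply zero_of_comp_mono i
    have g0 : kernel.ι (biprod.desc i k) ≫ (biprod.fst ≫ i + biprod.snd ≫ k) = 0 := by
      rw [← biprod.desc_eq]; exact kernel.condition _
    have g1 : kernel.ι (biprod.desc i k) ≫ biprod.fst ≫ i +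
        kernel.ι (biprod.desc i k) ≫ biprod.snd ≫ k = 0 := by
      simpa [Preadditive.comp_add] using g0
    have g2 : kernel.ι (biprod.desc i k) ≫ biprod.snd ≫ k = 0 := by
      rw [← Category.assoc, hsnd, zero_comp]
    rw [g2, add_zero] at g1
    simpa [Category.assoc] using g1
  apply biprod.hom_ext <;> simp [hfst, hsnd]

/-! ### The epi part -/
/-! ### The epi part -/

lemma main_epi {V : A} (i : V ⟶ 𝟙_ A) [Mono i] (φ : (𝟙_ A : A) ⟶ (Vᘁ)) :
    Epi (biprod.desc i (kernel.ι φ)) := by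
  have hic : i ≫ cokernel.π (biprod.desc i (kernel.ι φ)) = 0 := by
    calc i ≫ cokernel.π (biprod.desc i (kernel.ι φ))
        = (biprod.inl ≫ biprod.desc i (kernel.ι φ)) ≫
            cokernel.π (biprod.desc i (kernel.ι φ)) := by rw [biprod.inl_desc]
    _ = 0 := by rw [Category.assoc, cokernel.condition, comp_zero]
  have hkc : kernel.ι φ ≫ cokernel.π (biprod.desc i (kernel.ι φ)) = 0 := by
    calc kernel.ι φ ≫ cokernel.π (biprod.desc i (kernel.ι φ))
        = (biprod.inr ≫ biprod.desc i (kernel.ι φ)) ≫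
            cokernel.π (biprod.desc i (kernel.ι φ)) := by rw [biprod.inr_desc]
    _ = 0 := by rw [Category.assoc, cokernel.condition, comp_zero]
  -- C ⊗ V is zero
  haveI : IsIso (i ▷ V) := isIso_whiskerRight_self i
  have hQV : IsZero (cokernel i ⊗ V) := by
    have hz : cokernel.π i ▷ V = 0 := by
      apply (cancel_epi (i ▷ V)).mp
      rw [← MonoidalCategory.comp_whiskerRight, cokernel.condition,
        MonoidalPreadditive.zero_whiskerRight, comp_zero]
    haveI : Epi (cokernel.π i ▷ V) := epi_whiskerRight' _ V
    exact isZero_of_epi_zero (cokernel.π i ▷ V) hz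
  haveI : Epi (cokernel.π i ≫
      cokernel.desc i (cokernel.π (biprod.desc i (kernel.ι φ))) hic) := by
    rw [cokernel.π_desc]; infer_instance
  haveI hqe : Epi (cokernel.desc i (cokernel.π (biprod.desc i (kernel.ι φ))) hic) :=
    epi_of_epi (cokernel.π i) _
  haveI : Epi ((cokernel.desc i (cokernel.π (biprod.desc i (kernel.ι φ))) hic) ▷ V) :=
    epi_whiskerRight' _ V
  have hCV : IsZero (cokernel (biprod.desc i (kernel.ι φ)) ⊗ V) :=
    isZero_of_epi_zero
      ((cokernel.desc i (cokernel.π (biprod.desc i (kernel.ι φ))) hic) ▷ V)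
      (hQV.eq_zero_of_src _)
  have hVC : IsZero (V ⊗ cokernel (biprod.desc i (kernel.ι φ))) :=
    hCV.of_iso (β_ V (cokernel (biprod.desc i (kernel.ι φ))))
  -- the dual of C tensored with C is zero
  have h1 : IsZero (((cokernel (biprod.desc i (kernel.ι φ)))ᘁ) ⊗ (Vᘁ)) :=
    isZero_rightDual_tensor hVC
  haveI : Mono (((cokernel (biprod.desc i (kernel.ι φ)))ᘁ : A) ◁
      Abelian.factorThruCoimage φ) := mono_whiskerLeft' _ _
  have h2 : IsZero (((cokernel (biprod.desc i (kernel.ι φ)))ᘁ : A) ⊗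
      Abelian.coimage φ) :=
    isZero_of_mono_zero (((cokernel (biprod.desc i (kernel.ι φ)))ᘁ : A) ◁
      Abelian.factorThruCoimage φ) (h1.eq_zero_of_tgt _)
  haveI : Epi (cokernel.π (kernel.ι φ) ≫
      cokernel.desc (kernel.ι φ) (cokernel.π (biprod.desc i (kernel.ι φ))) hkc) := by
    rw [cokernel.π_desc]; infer_instance
  haveI hte : Epi (cokernel.desc (kernel.ι φ)
      (cokernel.π (biprod.desc i (kernel.ι φ))) hkc) :=
    epi_of_epi (cokernel.π (kernel.ι φ)) _
  haveI : Epi (((cokernel (biprod.desc i (kernel.ι φ)))ᘁ : A) ◁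
      cokernel.desc (kernel.ι φ) (cokernel.π (biprod.desc i (kernel.ι φ))) hkc) :=
    epi_whiskerLeft' _ _
  have h3 : IsZero (((cokernel (biprod.desc i (kernel.ι φ)))ᘁ : A) ⊗
      cokernel (biprod.desc i (kernel.ι φ))) :=
    isZero_of_epi_zero (((cokernel (biprod.desc i (kernel.ι φ)))ᘁ : A) ◁
      cokernel.desc (kernel.ι φ) (cokernel.π (biprod.desc i (kernel.ι φ))) hkc)
      (h2.eq_zero_of_src _)
  have hCzero : IsZero (cokernel (biprod.desc i (kernel.ι φ))) :=
    isZero_of_dual_tensor_zero h3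
  exact Abelian.epi_of_cokernel_π_eq_zero _ (hCzero.eq_zero_of_tgt _)

end UnitDecompAux

/-- In a rigid abelian symmetric monoidal category, for any subobject `U` of the unit
object `𝟙_ A`, the unit decomposes as `U ⊕ U^⊥`, where `U^⊥` is the kernel of the
morphism `𝟙_ A ⟶ Uᘁ` obtained by dualising the inclusion `U ⟶ 𝟙_ A`. -/
theorem unit_decomposes_subobject_perp
    {A : Type*} [Category A] [Abelian A]
    [MonoidalCategory A] [SymmetricCategory A] [MonoidalPreadditive A]
    [RigidCategory A] (U : Subobject (𝟙_ A)) :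
    IsIso (biprod.desc U.arrow
      (kernel.ι ((η_ (𝟙_ A) ((𝟙_ A)ᘁ) ≫ (λ_ ((𝟙_ A)ᘁ)).hom) ≫ (U.arrow)ᘁ))) := by
  set φ := (η_ (𝟙_ A) ((𝟙_ A)ᘁ) ≫ (λ_ ((𝟙_ A)ᘁ)).hom) ≫ (U.arrow)ᘁ with hφ
  have hkV : kernel.ι φ ▷ (U : A) = 0 := by
    have h1 : (kernel.ι φ ▷ (U : A)) ≫ ((λ_ (U : A)).hom ≫ U.arrow) = 0 := by
      rw [← UnitDecompAux.phi_uncurry U.arrow, ← hφ, ← Category.assoc,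
        ← MonoidalCategory.comp_whiskerRight, kernel.condition,
        MonoidalPreadditive.zero_whiskerRight, zero_comp]
    haveI : Mono ((λ_ (U : A)).hom ≫ U.arrow) := mono_comp _ _
    exact zero_of_comp_mono _ h1
  haveI hm : Mono (biprod.desc U.arrow (kernel.ι φ)) :=
    UnitDecompAux.main_mono U.arrow (kernel.ι φ) hkV
  haveI he : Epi (biprod.desc U.arrow (kernel.ι φ)) :=
    UnitDecompAux.main_epi U.arrow φ
  exact isIso_of_mono_of_epi _
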